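/- Let Φ = (φ_n)_n and Ψ = (ψ_n)_n be two frames for H and let Φ^{gd} = (φ^{gd}_n)_n be a fixed g-dual frame of Φ with corresponding invertible operator A. Then there exist constants ε > 0 and C > 0 (depending only on Φ, Ψ and Φ^{gd}) with the following property: if the difference sequence Φ − Ψ = (φ_n − ψ_n)_n is a Bessel sequence with Bessel bound M_{Φ−Ψ} ≤ ε, then there exists a g-dual frame Ψ^{gd} = (ψ^{gd}_n)_n of Ψ with corresponding invertible operator A (so that T_Φ U_{Φ^{gd}} = A^{-1} = T_Ψ U_{Ψ^{gd}}) such that Φ^{gd} − Ψ^{gd} = (φ^{gd}_n − ψ^{gd}_n)_n is a Bessel sequence with Bessel bound at most C · M_{Φ−Ψ}. -/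

import Mathlib

noncomputable section

open ContinuousLinearMap
open scoped ComplexInnerProductSpace ENNReal

variable {H : Type*} [NormedAddCommGroup H] [InnerProductSpace ℂ H] [CompleteSpace H]

/-- The sequence space `ℓ²(ℕ)`. -/
abbrev Ltwo : Type := lp (fun _ : ℕ => ℂ) 2

/-- `φ` is a Bessel sequence with Bessel bound `M`:
`∑ₙ |⟨f, φₙ⟩|² ≤ M‖f‖²` for every `f`.  (Mathlib inner products are conjugate-linear in the
first slot, so `⟪φ n, f⟫` corresponds to the paper's `⟨f, φₙ⟩`.) -/
def IsBesselBound (φ : ℕ → H) (M : ℝ) : Prop :=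
  ∀ f : H, Summable (fun n => ‖(⟪φ n, f⟫ : ℂ)‖ ^ 2) ∧
    ∑' n, ‖(⟪φ n, f⟫ : ℂ)‖ ^ 2 ≤ M * ‖f‖ ^ 2

/-- `φ` is a frame with lower frame bound `m` and upper (Bessel) bound `M`. -/
def IsFrameWith (φ : ℕ → H) (m M : ℝ) : Prop :=
  0 < m ∧ IsBesselBound φ M ∧
    ∀ f : H, m * ‖f‖ ^ 2 ≤ ∑' n, ‖(⟪φ n, f⟫ : ℂ)‖ ^ 2

/-- `φ` is a frame for `H`. -/
def IsFrame (φ : ℕ → H) : Prop := ∃ m M, IsFrameWith φ m M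

/-- `U` is the analysis operator of `φ` : `U f = (⟨f, φₙ⟩)ₙ`.
The synthesis operator is then `T_φ = adjoint U` and the frame operator is
`S_φ = adjoint U ∘L U`. -/
def IsAnalysisOp (φ : ℕ → H) (U : H →L[ℂ] Ltwo) : Prop :=
  ∀ (f : H) (n : ℕ), U f n = (⟪φ n, f⟫ : ℂ)

/-- auxiliary: the square of the `ℓ²` norm is the sum of squares. -/
lemma norm_sq_eq_tsum_aux (x : Ltwo) : ‖x‖ ^ 2 = ∑' n, ‖x n‖ ^ 2 := by
  have h2 : (0:ℝ) < (2 : ℝ≥0∞).toReal := by norm_num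
  have := lp.norm_rpow_eq_tsum h2 x
  have e : (2 : ℝ≥0∞).toReal = ((2:ℕ):ℝ) := by norm_num
  rw [e] at this
  simpa [Real.rpow_natCast] using this

set_option maxHeartbeats 2000000

/-- Let Φ, Ψ be frames for H and Φᵍᵈ a fixed g-dual frame of Φ with corresponding
invertible operator A (so `T_Φ U_{Φᵍᵈ} = A⁻¹ = Ainv`).  Then there are constants ε, C > 0
such that whenever Φ - Ψ is a Bessel sequence with bound `M' ≤ ε`, there is a g-dual frame
Ψᵍᵈ of Ψ with the same corresponding operator A (i.e. `T_Ψ U_{Ψᵍᵈ} = A⁻¹`) such that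
Φᵍᵈ - Ψᵍᵈ is a Bessel sequence with bound `C * M'`. -/
theorem statement9 (φ ψ φgd : ℕ → H) (hφ : IsFrame φ) (hψ : IsFrame ψ) (hφgd : IsFrame φgd)
    (Uφ Uψ Vgd : H →L[ℂ] Ltwo)
    (hUφ : IsAnalysisOp φ Uφ) (hUψ : IsAnalysisOp ψ Uψ) (hVgd : IsAnalysisOp φgd Vgd)
    (A Ainv : H →L[ℂ] H) (hA1 : A ∘L Ainv = 1) (hA2 : Ainv ∘L A = 1)
    (hgd : adjoint Uφ ∘L Vgd = Ainv) :
    ∃ ε > (0 : ℝ), ∃ C > (0 : ℝ), ∀ M' : ℝ,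
      IsBesselBound (fun n => φ n - ψ n) M' → M' ≤ ε →
      ∃ (ψgd : ℕ → H) (V : H →L[ℂ] Ltwo),
        IsFrame ψgd ∧ IsAnalysisOp ψgd V ∧
        adjoint Uψ ∘L V = Ainv ∧
        IsBesselBound (fun n => φgd n - ψgd n) (C * M') := by
  obtain ⟨mg, Mg0, hmg, hBg0, hlg⟩ := hφgd
  set Mg : ℝ := max Mg0 0 with hMgdef
  have hMg0 : (0:ℝ) ≤ Mg := le_max_right _ _
  have hBg : IsBesselBound φgd Mg := by
    intro f
    refine ⟨(hBg0 f).1, le_trans (hBg0 f).2 ?_⟩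
    exact mul_le_mul_of_nonneg_right (le_max_left _ _) (sq_nonneg _)
  set K : ℝ := ‖A‖ * ‖Vgd‖ + 1 with hKdef
  have hK : (0:ℝ) < K := by positivity
  clear_value Mg K
  have hK2 : (0:ℝ) < K ^ 2 := pow_pos hK 2
  refine ⟨1 / (4 * K ^ 2), div_pos one_pos (by nlinarith), 4 * (Mg + 1) * K ^ 2,
    by nlinarith [mul_pos (show (0:ℝ) < Mg + 1 by linarith) hK2], ?_⟩
  intro M' hM' hMε
  by_cases hM'0 : 0 ≤ M'
  · -- main case
    set D : H →L[ℂ] Ltwo := Uφ - Uψ with hDdef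
    clear_value D
    have hDapp : ∀ f : H, ‖D f‖ ^ 2 ≤ M' * ‖f‖ ^ 2 := by
      intro f
      rw [norm_sq_eq_tsum_aux (D f)]
      have he : ∀ n : ℕ, ‖(D f) n‖ ^ 2 = ‖(⟪φ n - ψ n, f⟫ : ℂ)‖ ^ 2 := by
        intro n
        have : (D f) n = Uφ f n - Uψ f n := by
          rw [hDdef]; simp
        rw [this, hUφ f n, hUψ f n, ← inner_sub_left]
      calc ∑' n, ‖(D f) n‖ ^ 2 = ∑' n, ‖(⟪φ n - ψ n, f⟫ : ℂ)‖ ^ 2 := tsum_congr he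
        _ ≤ M' * ‖f‖ ^ 2 := (hM' f).2
    have hDnorm : ‖D‖ ≤ Real.sqrt M' := by
      refine opNorm_le_bound _ (Real.sqrt_nonneg _) fun f => ?_
      have h1 : ‖D f‖ ≤ Real.sqrt (M' * ‖f‖ ^ 2) := by
        rw [← Real.sqrt_sq (norm_nonneg (D f))]
        exact Real.sqrt_le_sqrt (hDapp f)
      calc ‖D f‖ ≤ Real.sqrt (M' * ‖f‖ ^ 2) := h1
        _ = Real.sqrt M' * ‖f‖ := by
            rw [Real.sqrt_mul hM'0, Real.sqrt_sq (norm_nonneg f)]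
    set t : H →L[ℂ] H := A ∘L (adjoint D ∘L Vgd) with htdef
    clear_value t
    have ht : ‖t‖ ≤ K * Real.sqrt M' := by
      have h1 : ‖t‖ ≤ ‖A‖ * (‖adjoint D‖ * ‖Vgd‖) := by
        rw [htdef]
        exact le_trans (opNorm_comp_le _ _)
          (mul_le_mul_of_nonneg_left (opNorm_comp_le _ _) (norm_nonneg _))
      have h2 : ‖adjoint D‖ = ‖D‖ := adjoint.norm_map D
      rw [h2] at h1
      have h3 : ‖A‖ * (‖D‖ * ‖Vgd‖) ≤ K * Real.sqrt M' := by
        have hs0 : (0:ℝ) ≤ Real.sqrt M' := Real.sqrt_nonneg _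
        nlinarith [norm_nonneg A, norm_nonneg Vgd, norm_nonneg D, hDnorm]
      linarith
    have hsq : Real.sqrt M' ≤ 1 / (2 * K) := by
      have h1 : Real.sqrt M' ≤ Real.sqrt (1 / (4 * K ^ 2)) := Real.sqrt_le_sqrt hMε
      have h2 : Real.sqrt (1 / (4 * K ^ 2)) = 1 / (2 * K) := by
        rw [show (1 : ℝ) / (4 * K ^ 2) = (1 / (2 * K)) ^ 2 by field_simp ; ring]
        exact Real.sqrt_sq (by positivity)
      linarith
    have ht2 : ‖t‖ ≤ 1 / 2 := by
      have := mul_le_mul_of_nonneg_left hsq (le_of_lt hK)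
      have hKe : K * (1 / (2 * K)) = 1 / 2 := by
        field_simp
      calc ‖t‖ ≤ K * Real.sqrt M' := ht
        _ ≤ K * (1 / (2 * K)) := this
        _ = 1 / 2 := hKe
    have ht1 : ‖t‖ < 1 := lt_of_le_of_lt ht2 (by norm_num)
    obtain ⟨Gi, hu1, hu2⟩ : ∃ Gi : H →L[ℂ] H, (1 - t) * Gi = 1 ∧ Gi * (1 - t) = 1 :=
      ⟨↑(Units.oneSub t ht1)⁻¹, (Units.oneSub t ht1).val_inv, (Units.oneSub t ht1).inv_val⟩
    have hone : ‖(1 : H →L[ℂ] H)‖ ≤ 1 := by rw [one_def]; exact norm_id_le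
    have hGieq : Gi = 1 + Gi * t := by
      have h : Gi = Gi * (1 - t) + Gi * t := by noncomm_ring
      rw [hu2] at h; exact h
    have hGin : ‖Gi‖ ≤ 2 := by
      have h1 : ‖Gi‖ ≤ ‖(1 : H →L[ℂ] H)‖ + ‖Gi‖ * ‖t‖ := by
        calc ‖Gi‖ = ‖(1 : H →L[ℂ] H) + Gi * t‖ := by rw [← hGieq]
          _ ≤ ‖(1 : H →L[ℂ] H)‖ + ‖Gi * t‖ := norm_add_le _ _
          _ ≤ ‖(1 : H →L[ℂ] H)‖ + ‖Gi‖ * ‖t‖ := by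
              have := norm_mul_le Gi t; linarith
      nlinarith [norm_nonneg Gi, norm_nonneg t]
    have hdiffnorm : ‖(1 : H →L[ℂ] H) - Gi‖ ≤ 2 * ‖t‖ := by
      have e : (1 : H →L[ℂ] H) - Gi = -(Gi * t) := by
        have h : Gi * (1 - t) - Gi = -(Gi * t) := by noncomm_ring
        rwa [hu2] at h
      rw [e, norm_neg]
      calc ‖Gi * t‖ ≤ ‖Gi‖ * ‖t‖ := norm_mul_le _ _
        _ ≤ 2 * ‖t‖ := mul_le_mul_of_nonneg_right hGin (norm_nonneg _)
    have hGiapp : ∀ f : H, ‖Gi f‖ ≤ 2 * ‖f‖ := by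
      intro f
      calc ‖Gi f‖ ≤ ‖Gi‖ * ‖f‖ := le_opNorm _ _
        _ ≤ 2 * ‖f‖ := mul_le_mul_of_nonneg_right hGin (norm_nonneg _)
    have hGilow : ∀ f : H, ‖f‖ ≤ (3/2 : ℝ) * ‖Gi f‖ := by
      intro f
      have h1 : ((1 - t) * Gi) f = f := by rw [hu1, one_apply_eq_self]
      have h2 : ‖f‖ ≤ ‖(1 : H →L[ℂ] H) - t‖ * ‖Gi f‖ := by
        calc ‖f‖ = ‖(1 - t) (Gi f)‖ := by rw [← mul_apply_eq_comp, h1]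
          _ ≤ ‖(1 : H →L[ℂ] H) - t‖ * ‖Gi f‖ := le_opNorm _ _
      have h3 : ‖(1 : H →L[ℂ] H) - t‖ ≤ (3/2 : ℝ) := by
        calc ‖(1 : H →L[ℂ] H) - t‖ ≤ ‖(1 : H →L[ℂ] H)‖ + ‖t‖ := norm_sub_le _ _
          _ ≤ 3/2 := by linarith
      calc ‖f‖ ≤ ‖(1 : H →L[ℂ] H) - t‖ * ‖Gi f‖ := h2
        _ ≤ (3/2 : ℝ) * ‖Gi f‖ := mul_le_mul_of_nonneg_right h3 (norm_nonneg _)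
    set Q : H →L[ℂ] H := adjoint Gi with hQdef
    have key : ∀ (f : H) (n : ℕ), (⟪Q (φgd n), f⟫ : ℂ) = ⟪φgd n, Gi f⟫ := by
      intro f n
      exact adjoint_inner_left Gi f (φgd n)
    refine ⟨fun n => Q (φgd n), Vgd ∘L Gi, ?_, ?_, ?_, ?_⟩
    · -- IsFrame
      refine ⟨mg * (4/9), 4 * (Mg + 1), by nlinarith [hmg], ?_, ?_⟩
      · intro f
        constructor
        · exact (summable_congr fun n => by rw [key]).mpr (hBg (Gi f)).1
        · have h1 : ∑' n, ‖(⟪Q (φgd n), f⟫ : ℂ)‖ ^ 2 = ∑' n, ‖(⟪φgd n, Gi f⟫ : ℂ)‖ ^ 2 :=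
            tsum_congr fun n => by rw [key]
          rw [h1]
          have h2 := (hBg (Gi f)).2
          have h3 := hGiapp f
          have h4 : ‖Gi f‖ ^ 2 ≤ 4 * ‖f‖ ^ 2 := by
            nlinarith [norm_nonneg (Gi f), norm_nonneg f]
          have h5 : Mg * ‖Gi f‖ ^ 2 ≤ Mg * (4 * ‖f‖ ^ 2) :=
            mul_le_mul_of_nonneg_left h4 hMg0
          nlinarith [sq_nonneg ‖f‖]
      · intro f
        have h1 : ∑' n, ‖(⟪Q (φgd n), f⟫ : ℂ)‖ ^ 2 = ∑' n, ‖(⟪φgd n, Gi f⟫ : ℂ)‖ ^ 2 :=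
          tsum_congr fun n => by rw [key]
        rw [h1]
        have h2 := hlg (Gi f)
        have h3 := hGilow f
        have h4 : ‖f‖ ^ 2 ≤ (9/4) * ‖Gi f‖ ^ 2 := by
          nlinarith [norm_nonneg f, norm_nonneg (Gi f)]
        have h5 : mg * ‖f‖ ^ 2 ≤ mg * ((9/4) * ‖Gi f‖ ^ 2) :=
          mul_le_mul_of_nonneg_left h4 (le_of_lt hmg)
        nlinarith [sq_nonneg ‖Gi f‖]
    · -- IsAnalysisOp
      intro f n
      rw [comp_apply, hVgd (Gi f) n, key]
    · -- g-dual property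
      have hadjD : adjoint D = adjoint Uφ - adjoint Uψ := by
        rw [hDdef]; exact map_sub (adjoint : (H →L[ℂ] Ltwo) ≃ₗᵢ⋆[ℂ] (Ltwo →L[ℂ] H)) Uφ Uψ
      have h3 : adjoint Uψ ∘L Vgd = Ainv - adjoint D ∘L Vgd := by
        rw [hadjD, ContinuousLinearMap.sub_comp, hgd]; abel
      have h4 : Ainv ∘L t = adjoint D ∘L Vgd := by
        rw [htdef, ← comp_assoc, hA2, one_def, id_comp]
      calc adjoint Uψ ∘L (Vgd ∘L Gi) = (adjoint Uψ ∘L Vgd) ∘L Gi := (comp_assoc _ _ _).symm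
        _ = (Ainv ∘L (1 - t)) ∘L Gi := by
            rw [h3, ← h4, comp_sub, one_def, comp_id]
        _ = Ainv ∘L ((1 - t) * Gi) := comp_assoc _ _ _
        _ = Ainv := by rw [hu1, one_def, comp_id]
    · -- Bessel bound on the difference
      intro f
      have keyd : ∀ n : ℕ, (⟪φgd n - Q (φgd n), f⟫ : ℂ) = ⟪φgd n, f - Gi f⟫ := by
        intro n
        rw [inner_sub_left, inner_sub_right, key]
      set g : H := f - Gi f with hgdef
      clear_value g
      constructor
      · have hfun : (fun n => ‖(⟪(fun n => φgd n - Q (φgd n)) n, f⟫ : ℂ)‖ ^ 2)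
            = fun n => ‖(⟪φgd n, g⟫ : ℂ)‖ ^ 2 := funext fun n => by simp only [keyd n]
        rw [hfun]
        exact (hBg g).1
      · have h1 : ∑' n, ‖(⟪(fun n => φgd n - Q (φgd n)) n, f⟫ : ℂ)‖ ^ 2
            = ∑' n, ‖(⟪φgd n, g⟫ : ℂ)‖ ^ 2 := tsum_congr fun n => by simp only [keyd n]
        rw [h1]
        have h2 := (hBg g).2
        have hg1 : ‖g‖ ≤ 2 * ‖t‖ * ‖f‖ := by
          have e : g = ((1 : H →L[ℂ] H) - Gi) f := by
            rw [hgdef]; simp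
          rw [e]
          calc ‖((1 : H →L[ℂ] H) - Gi) f‖ ≤ ‖(1 : H →L[ℂ] H) - Gi‖ * ‖f‖ := le_opNorm _ _
            _ ≤ 2 * ‖t‖ * ‖f‖ := mul_le_mul_of_nonneg_right hdiffnorm (norm_nonneg _)
        have hg2 : ‖g‖ ≤ 2 * K * Real.sqrt M' * ‖f‖ := by
          have := mul_le_mul_of_nonneg_right ht (norm_nonneg f)
          nlinarith [hg1, this]
        have hg3 : ‖g‖ ^ 2 ≤ 4 * K ^ 2 * M' * ‖f‖ ^ 2 := by
          have h4 : ‖g‖ ^ 2 ≤ (2 * K * Real.sqrt M' * ‖f‖) ^ 2 :=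
            pow_le_pow_left₀ (norm_nonneg g) hg2 2
          have hs := Real.sq_sqrt hM'0
          have h5 : (2 * K * Real.sqrt M' * ‖f‖) ^ 2 = 4 * K ^ 2 * M' * ‖f‖ ^ 2 := by
            calc (2 * K * Real.sqrt M' * ‖f‖) ^ 2
                = 4 * K ^ 2 * (Real.sqrt M') ^ 2 * ‖f‖ ^ 2 := by ring
              _ = 4 * K ^ 2 * M' * ‖f‖ ^ 2 := by rw [hs]
          linarith
        have hMg1 : Mg * ‖g‖ ^ 2 ≤ (Mg + 1) * (4 * K ^ 2 * M' * ‖f‖ ^ 2) := by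
          have hx : (0:ℝ) ≤ 4 * K ^ 2 * M' * ‖f‖ ^ 2 :=
            mul_nonneg (mul_nonneg (mul_nonneg (by norm_num) (sq_nonneg K)) hM'0)
              (sq_nonneg ‖f‖)
          have h6 := mul_le_mul_of_nonneg_left hg3 hMg0
          nlinarith [h6, hx]
        calc ∑' n, ‖(⟪φgd n, g⟫ : ℂ)‖ ^ 2 ≤ Mg * ‖g‖ ^ 2 := h2
          _ ≤ (Mg + 1) * (4 * K ^ 2 * M' * ‖f‖ ^ 2) := hMg1
          _ = 4 * (Mg + 1) * K ^ 2 * M' * ‖f‖ ^ 2 := by ring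
  · -- degenerate case: M' < 0 forces H = 0
    push_neg at hM'0
    have hzero : ∀ f : H, f = 0 := by
      intro f
      have h := (hM' f).2
      have h0 : (0:ℝ) ≤ ∑' n, ‖(⟪(fun n => φ n - ψ n) n, f⟫ : ℂ)‖ ^ 2 :=
        tsum_nonneg fun n => by positivity
      have h1 : (0:ℝ) ≤ M' * ‖f‖ ^ 2 := le_trans h0 h
      have h2 : ‖f‖ ^ 2 ≤ 0 := by nlinarith [h1, hM'0]
      have h3 : ‖f‖ ≤ 0 := by nlinarith [norm_nonneg f]
      exact norm_le_zero_iff.mp h3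
    refine ⟨φgd, Vgd, ⟨mg, Mg0, hmg, hBg0, hlg⟩, hVgd, ?_, ?_⟩
    · refine ContinuousLinearMap.ext fun f => ?_
      rw [hzero f, map_zero, map_zero]
    · intro f
      have e : ∀ n : ℕ, (⟪(fun n => φgd n - φgd n) n, f⟫ : ℂ) = 0 := by
        intro n
        simp only [sub_self, inner_zero_left]
      have hfun : (fun n => ‖(⟪(fun n => φgd n - φgd n) n, f⟫ : ℂ)‖ ^ 2)
          = fun _ : ℕ => (0:ℝ) := funext fun n => by rw [e n]; norm_num
      constructor
      · rw [hfun]; exact summable_zero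
      · have h1 : ∑' n, ‖(⟪(fun n => φgd n - φgd n) n, f⟫ : ℂ)‖ ^ 2 = 0 := by
          calc ∑' n, ‖(⟪(fun n => φgd n - φgd n) n, f⟫ : ℂ)‖ ^ 2
              = ∑' _ : ℕ, (0:ℝ) := tsum_congr fun n => by rw [e n]; norm_num
            _ = 0 := tsum_zero
        rw [h1, hzero f, norm_zero]
        nlinarith
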